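/- The polynomial F(x,y) = 1 − x(x+1)y − 2x²y² − x²(x+1)y³ + x⁴y⁴ is irreducible in ℤ[x,y]. -/

import Mathlib

namespace Stmt8Aux
open Polynomial


lemma coeff_eqs {q a b : ℤ[X]} (h : q = a * b) (k : ℕ) :
    q.coeff k = ∑ i ∈ Finset.range (k+1), a.coeff i * b.coeff (k - i) := by
  rw [h, coeff_mul, Finset.Nat.sum_antidiagonal_eq_sum_range_succ_mk]

lemma qcoeff : ∀ k, ((X:ℤ[X])^4 - C 2*X^3 - C 2*X^2 - C 2*X + 1).coeff k =
    (if k = 0 then 1 else if k ≤ 3 then -2 else if k = 4 then 1 else 0) := by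
  intro k
  simp only [coeff_add, coeff_sub, coeff_X_pow, coeff_C_mul, coeff_X, coeff_one]
  rcases k with _|_|_|_|_|k <;> norm_num <;> omega

lemma sq_ne_five (u : ℤ) : u ^ 2 ≠ 5 := by
  intro h
  have h1 : u ≤ 2 := by nlinarith
  have h2 : -2 ≤ u := by nlinarith
  interval_cases u <;> omega

lemma no13 {a b : ℤ[X]} (h : (X:ℤ[X])^4 - C 2*X^3 - C 2*X^2 - C 2*X + 1 = a * b)
    (ha : a.natDegree = 1) (hb : b.natDegree = 3) : False := by
  have Ea := fun i (h : 1 < i) => coeff_eq_zero_of_natDegree_lt (lt_of_le_of_lt ha.le h)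
  have Eb := fun j (h : 3 < j) => coeff_eq_zero_of_natDegree_lt (lt_of_le_of_lt hb.le h)
  have h0 := coeff_eqs h 0
  have h1 := coeff_eqs h 1
  have h2 := coeff_eqs h 2
  have h3 := coeff_eqs h 3
  have h4 := coeff_eqs h 4
  simp only [qcoeff, Finset.sum_range_succ, Finset.sum_range_zero,
    Ea 2 (by norm_num), Ea 3 (by norm_num), Ea 4 (by norm_num), Eb 4 (by norm_num)] at h0 h1 h2 h3 h4
  norm_num at h0 h1 h2 h3 h4
  rcases Int.eq_one_or_neg_one_of_mul_eq_one' h4.symm with ⟨e1, f1⟩ | ⟨e1, f1⟩ <;>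
    rcases Int.eq_one_or_neg_one_of_mul_eq_one' h0.symm with ⟨e0, f0⟩ | ⟨e0, f0⟩ <;>
    simp only [e1, f1, e0, f0, one_mul, neg_mul, neg_neg, mul_one, mul_neg, neg_one_mul]
      at h1 h2 h3 <;> omega

lemma no22 {a b : ℤ[X]} (h : (X:ℤ[X])^4 - C 2*X^3 - C 2*X^2 - C 2*X + 1 = a * b)
    (ha : a.natDegree = 2) (hb : b.natDegree = 2) : False := by
  have Ea := fun i (h : 2 < i) => coeff_eq_zero_of_natDegree_lt (lt_of_le_of_lt ha.le h)
  have Eb := fun j (h : 2 < j) => coeff_eq_zero_of_natDegree_lt (lt_of_le_of_lt hb.le h)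
  have h0 := coeff_eqs h 0
  have h1 := coeff_eqs h 1
  have h2 := coeff_eqs h 2
  have h3 := coeff_eqs h 3
  have h4 := coeff_eqs h 4
  simp only [qcoeff, Finset.sum_range_succ, Finset.sum_range_zero,
    Ea 3 (by norm_num), Ea 4 (by norm_num), Eb 3 (by norm_num), Eb 4 (by norm_num)] at h0 h1 h2 h3 h4
  norm_num at h0 h1 h2 h3 h4
  rcases Int.eq_one_or_neg_one_of_mul_eq_one' h4.symm with ⟨e2, f2⟩ | ⟨e2, f2⟩ <;>
    rcases Int.eq_one_or_neg_one_of_mul_eq_one' h0.symm with ⟨e0, f0⟩ | ⟨e0, f0⟩ <;>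
    simp only [e2, f2, e0, f0, one_mul, neg_mul, neg_neg, mul_one, mul_neg, neg_one_mul]
      at h1 h2 h3
  · exact sq_ne_five (a.coeff 1 + 1) (by linear_combination (-(a.coeff 1)) * h1 + h2)
  · omega
  · omega
  · exact sq_ne_five (a.coeff 1 - 1) (by linear_combination (a.coeff 1) * h1 + h2)

lemma lemA : Irreducible ((X:ℤ[X])^4 - C 2*X^3 - C 2*X^2 - C 2*X + 1) := by
  have hdeg : ((X:ℤ[X])^4 - C 2*X^3 - C 2*X^2 - C 2*X + 1).natDegree = 4 := by compute_degree!
  have hq0 : ((X:ℤ[X])^4 - C 2*X^3 - C 2*X^2 - C 2*X + 1) ≠ 0 := fun h => by rw [h] at hdeg; simp at hdeg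
  constructor
  · intro h
    have := natDegree_eq_zero_of_isUnit h
    omega
  · intro a b hab
    have ha0 : a ≠ 0 := fun h => hq0 (by rw [hab, h, zero_mul])
    have hb0 : b ≠ 0 := fun h => hq0 (by rw [hab, h, mul_zero])
    have hsum : a.natDegree + b.natDegree = 4 := by
      rw [← natDegree_mul ha0 hb0, ← hab, hdeg]
    have hCunit : ∀ c d : ℤ[X], (X:ℤ[X])^4 - C 2*X^3 - C 2*X^2 - C 2*X + 1 = c * d → c.natDegree = 0 → IsUnit c := by
      intro c d hcd hc
      have h0 := coeff_eqs hcd 0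
      simp only [qcoeff] at h0
      norm_num at h0
      rw [eq_C_of_natDegree_eq_zero hc]
      exact isUnit_C.mpr (IsUnit.of_mul_eq_one _ h0.symm)
    have ha4 : a.natDegree ≤ 4 := by omega
    interval_cases h : a.natDegree
    · exact Or.inl (hCunit a b hab h)
    · exact absurd (no13 hab h (by omega)) id
    · exact absurd (no22 hab h (by omega)) id
    · exact absurd (no13 (hab.trans (mul_comm a b)) (by omega) h) id
    · exact Or.inr (hCunit b a (hab.trans (mul_comm a b)) (by omega))


noncomputable def pp : (Polynomial ℤ)[X] :=
  C (X^4) * X^4 - C (X^2*(X+1)) * X^3 - C (2*X^2) * X^2 - C (X*(X+1)) * X + 1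


lemma pp_deg : pp.natDegree = 4 := by
  unfold pp
  compute_degree!

lemma pp_coeff0 : pp.coeff 0 = 1 := by
  unfold pp
  simp only [coeff_add, coeff_sub, coeff_C_mul, coeff_X_pow, coeff_one, coeff_X]
  norm_num

lemma pp_coeff4 : pp.coeff 4 = X^4 := by
  unfold pp
  simp only [coeff_add, coeff_sub, coeff_C_mul, coeff_X_pow, coeff_one, coeff_X]
  norm_num

lemma pp_map : pp.map (evalRingHom 1) = (X:ℤ[X])^4 - C 2*X^3 - C 2*X^2 - C 2*X + 1 := by
  unfold pp
  simp only [Polynomial.map_add, Polynomial.map_sub, Polynomial.map_mul, Polynomial.map_pow,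
    map_C, map_X, Polynomial.map_one, coe_evalRingHom, eval_pow, eval_X, eval_mul, eval_add,
    eval_one, eval_ofNat]
  norm_num

lemma lemB : Irreducible pp := by
  have hd4 : pp.natDegree = 4 := pp_deg
  have hpp0 : pp ≠ 0 := fun h => by rw [h] at hd4; simp at hd4
  have key : ∀ c d : (Polynomial ℤ)[X], pp = c * d → IsUnit (c.map (evalRingHom 1)) → IsUnit c := by
    intro c d hcd hu
    have hc0 : c ≠ 0 := fun h => hpp0 (by rw [hcd, h, zero_mul])
    have hd0 : d ≠ 0 := fun h => hpp0 (by rw [hcd, h, mul_zero])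
    have hlcpp : pp.leadingCoeff = X^4 := by rw [leadingCoeff, hd4, pp_coeff4]
    have hlc : c.leadingCoeff * d.leadingCoeff = X^4 := by
      rw [← leadingCoeff_mul, ← hcd, hlcpp]
    have hdvd : c.leadingCoeff ∣ (X:ℤ[X])^4 := ⟨d.leadingCoeff, hlc.symm⟩
    obtain ⟨i, hi, u, hui⟩ := (dvd_prime_pow prime_X 4).mp hdvd
    have hmul1 : (evalRingHom 1) c.leadingCoeff * (evalRingHom 1) (u : ℤ[X]) = 1 := by
      rw [← map_mul, hui]
      simp
    have hne : (evalRingHom 1) c.leadingCoeff ≠ 0 :=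
      (IsUnit.of_mul_eq_one _ hmul1).ne_zero
    have hdegc : (c.map (evalRingHom 1)).natDegree = c.natDegree :=
      natDegree_map_of_leadingCoeff_ne_zero _ hne
    have hc00 : c.natDegree = 0 := by rw [← hdegc]; exact natDegree_eq_zero_of_isUnit hu
    have h0 : c.coeff 0 * d.coeff 0 = 1 := by rw [← mul_coeff_zero, ← hcd, pp_coeff0]
    rw [eq_C_of_natDegree_eq_zero hc00]
    exact isUnit_C.mpr (IsUnit.of_mul_eq_one _ h0)
  constructor
  · intro h
    have := natDegree_eq_zero_of_isUnit h
    omega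
  · intro a b hab
    have hmap : (X:ℤ[X])^4 - C 2*X^3 - C 2*X^2 - C 2*X + 1
        = (a.map (evalRingHom 1)) * (b.map (evalRingHom 1)) := by
      rw [← Polynomial.map_mul, ← hab, pp_map]
    rcases lemA.isUnit_or_isUnit hmap with h | h
    · exact Or.inl (key a b hab h)
    · exact Or.inr (key b a (hab.trans (mul_comm a b)) h)

noncomputable def myEquiv : MvPolynomial (Fin 2) ℤ ≃ₐ[ℤ] Polynomial (Polynomial ℤ) :=
  ((MvPolynomial.renameEquiv ℤ (Equiv.swap (0 : Fin 2) 1)).trans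
    (MvPolynomial.finSuccEquiv ℤ 1)).trans
    (Polynomial.mapAlgEquiv ((MvPolynomial.finSuccEquiv ℤ 0).trans
      (Polynomial.mapAlgEquiv (MvPolynomial.isEmptyAlgEquiv ℤ (Fin 0)))))

lemma myEquiv_X0 : myEquiv (MvPolynomial.X 0) = Polynomial.C Polynomial.X := by
  simp only [myEquiv, AlgEquiv.trans_apply, MvPolynomial.renameEquiv_apply,
    MvPolynomial.rename_X, Equiv.swap_apply_left,
    show (MvPolynomial.X (1 : Fin 2) : MvPolynomial (Fin 2) ℤ)
      = MvPolynomial.X (Fin.succ 0) from rfl,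
    MvPolynomial.finSuccEquiv_X_succ, Polynomial.coe_mapAlgEquiv, Polynomial.map_C,
    MvPolynomial.finSuccEquiv_X_zero, Polynomial.map_X]
  simp [MvPolynomial.finSuccEquiv_X_zero]

lemma myEquiv_X1 : myEquiv (MvPolynomial.X 1) = Polynomial.X := by
  simp only [myEquiv, AlgEquiv.trans_apply, MvPolynomial.renameEquiv_apply,
    MvPolynomial.rename_X, Equiv.swap_apply_right,
    MvPolynomial.finSuccEquiv_X_zero, Polynomial.coe_mapAlgEquiv, Polynomial.map_X]

end Stmt8Aux

open MvPolynomial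

theorem stmt_8 :
    Irreducible
      (1 - X 0 * (X 0 + 1) * X 1 - 2 * (X 0) ^ 2 * (X 1) ^ 2
        - (X 0) ^ 2 * (X 0 + 1) * (X 1) ^ 3 + (X 0) ^ 4 * (X 1) ^ 4 :
        MvPolynomial (Fin 2) ℤ) := by
  refine (MulEquiv.irreducible_iff (Stmt8Aux.myEquiv : MvPolynomial (Fin 2) ℤ ≃ₐ[ℤ] _)).mp ?_
  have h : Stmt8Aux.myEquiv (1 - X 0 * (X 0 + 1) * X 1 - 2 * (X 0) ^ 2 * (X 1) ^ 2
        - (X 0) ^ 2 * (X 0 + 1) * (X 1) ^ 3 + (X 0) ^ 4 * (X 1) ^ 4) = Stmt8Aux.pp := by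
    simp only [map_add, map_sub, map_mul, map_one, map_pow, map_ofNat, Stmt8Aux.myEquiv_X0, Stmt8Aux.myEquiv_X1]
    unfold Stmt8Aux.pp
    simp only [map_mul, map_pow, map_add, map_one, map_ofNat]
    ring
  rw [h]
  exact Stmt8Aux.lemB
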